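/- The relativistic velocity-ratio collision map R_{m₁,m₂}(x,y) = ( y(m₁x+m₂y)/(m₂x+m₁y), x(m₁x+m₂y)/(m₂x+m₁y) ) satisfies the parametric set-theoretical Yang–Baxter equation: for all positive reals m₁, m₂, m₃ and all positive reals (x, y, z), one has R₂₃ ∘ R₁₃ ∘ R₁₂ (x,y,z) = R₁₂ ∘ R₁₃ ∘ R₂₃ (x,y,z), where Rᵢⱼ denotes the action of R with parameters (mᵢ, mⱼ) on the i-th and j-th components. (Note that R_{m₁,m₂} maps pairs of positive reals to pairs of positive reals, so all compositions are defined.) -/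
import Mathlib


/-- The relativistic velocity-ratio collision map `R_{m₁,m₂}`. -/
noncomputable def Rrel (m₁ m₂ : ℝ) (x y : ℝ) : ℝ × ℝ :=
  (y * ((m₁ * x + m₂ * y) / (m₂ * x + m₁ * y)),
   x * ((m₁ * x + m₂ * y) / (m₂ * x + m₁ * y)))

/-- Action of a map on the first and second factors of `X × X × X`. -/
def act12 {X : Type*} (R : X → X → X × X) (p : X × X × X) : X × X × X :=
  ((R p.1 p.2.1).1, (R p.1 p.2.1).2, p.2.2)

/-- Action of a map on the first and third factors of `X × X × X`. -/
def act13 {X : Type*} (R : X → X → X × X) (p : X × X × X) : X × X × X :=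
  ((R p.1 p.2.2).1, p.2.1, (R p.1 p.2.2).2)

/-- Action of a map on the second and third factors of `X × X × X`. -/
def act23 {X : Type*} (R : X → X → X × X) (p : X × X × X) : X × X × X :=
  (p.1, (R p.2.1 p.2.2).1, (R p.2.1 p.2.2).2)

set_option maxHeartbeats 4000000 in
/-- The relativistic velocity-ratio collision map satisfies the parametric
set-theoretical Yang–Baxter equation on positive reals. -/
theorem relativistic_velocity_ratio_yang_baxter
    (m₁ m₂ m₃ : ℝ) (hm₁ : 0 < m₁) (hm₂ : 0 < m₂) (hm₃ : 0 < m₃)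
    (x y z : ℝ) (hx : 0 < x) (hy : 0 < y) (hz : 0 < z) :
    act23 (Rrel m₂ m₃) (act13 (Rrel m₁ m₃) (act12 (Rrel m₁ m₂) (x, y, z))) =
      act12 (Rrel m₁ m₂) (act13 (Rrel m₁ m₃) (act23 (Rrel m₂ m₃) (x, y, z))) := by
  have d1 : m₂ * x + m₁ * y > 0 := by positivity
  have d2 : m₃ * y + m₂ * z > 0 := by positivity
  simp only [act12, act13, act23, Rrel, Prod.mk.injEq]
  have h1 : m₃ * (x * ((m₁ * x + m₂ * y) / (m₂ * x + m₁ * y))) + m₁ * z > 0 := by positivity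
  have h2 : m₃ * x + m₁ * (z * ((m₂ * y + m₃ * z) / (m₃ * y + m₂ * z))) > 0 := by positivity
  have h3 : m₂ * (y * ((m₁ * x + m₂ * y) / (m₂ * x + m₁ * y))) +
      m₃ * (z * ((m₁ * (x * ((m₁ * x + m₂ * y) / (m₂ * x + m₁ * y))) + m₃ * z) /
        (m₃ * (x * ((m₁ * x + m₂ * y) / (m₂ * x + m₁ * y))) + m₁ * z))) > 0 := by positivity
  have h4 : m₂ * (x * ((m₁ * x + m₃ * (z * ((m₂ * y + m₃ * z) / (m₃ * y + m₂ * z)))) /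
      (m₃ * x + m₁ * (z * ((m₂ * y + m₃ * z) / (m₃ * y + m₂ * z)))))) +
      m₁ * (y * ((m₂ * y + m₃ * z) / (m₃ * y + m₂ * z))) > 0 := by positivity
  refine ⟨?_, ?_, ?_⟩ <;> field_simp <;> ring
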